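/- Sample complexity of random Pauli measurements for many observables: with M independent random Pauli-basis measurement settings (each qubit basis uniform in {X,Y,Z}) and single-shot outcomes on copies of an N-qubit state ρ, the median-of-means estimators ô₁,...,ô_L of L Pauli expectation values tr(O_i ρ), each O_i of weight at most w, satisfy max_i |ô_i − tr(O_i ρ)| ≤ ε with probability at least 1−δ provided M ≥ C·3^w·log(2L/δ)/ε², for a universal constant C. -/

import Mathlib

open Matrix
open scoped Classical ComplexOrder

noncomputable section
open Finset

/-- The Pauli matrices X, Y, Z. -/
def PauliXYZ : Fin 3 → Matrix (Fin 2) (Fin 2) ℂ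
  | 0 => !![0, 1; 1, 0]
  | 1 => !![0, -Complex.I; Complex.I, 0]
  | 2 => !![1, 0; 0, -1]

/-- Eigenprojector `(I ± W)/2` of the Pauli matrix `W` (sign `+` for `b = true`). -/
def pauliProj (w : Fin 3) (b : Bool) : Matrix (Fin 2) (Fin 2) ℂ :=
  (2 : ℂ)⁻¹ • (1 + (if b then (1 : ℂ) else -1) • PauliXYZ w)

/-- A Pauli (`some w`) or the identity (`none`) on one qubit. -/
def pauliOfOpt : Option (Fin 3) → Matrix (Fin 2) (Fin 2) ℂ
  | none => 1
  | some w => PauliXYZ w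

/-- Tensor-product projector onto outcome `lam` of the product Pauli-basis
measurement in bases `W`. -/
def projN {N : ℕ} (W : Fin N → Fin 3) (lam : Fin N → Bool) :
    Matrix (Fin N → Fin 2) (Fin N → Fin 2) ℂ :=
  fun x y => ∏ n, pauliProj (W n) (lam n) (x n) (y n)

/-- The Pauli observable `O = P₁ ⊗ ⋯ ⊗ P_N` as a matrix. -/
def obsMat {N : ℕ} (O : Fin N → Option (Fin 3)) :
    Matrix (Fin N → Fin 2) (Fin N → Fin 2) ℂ :=
  fun x y => ∏ n, pauliOfOpt (O n) (x n) (y n)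

/-- Weight of a Pauli observable. -/
def weight {N : ℕ} (O : Fin N → Option (Fin 3)) : ℕ :=
  (Finset.univ.filter fun n => O n ≠ none).card

/-- Single-setting classical-shadow estimator for the Pauli observable `O`. -/
def shadowEst {N : ℕ} (O : Fin N → Option (Fin 3)) (W : Fin N → Fin 3)
    (lam : Fin N → Bool) : ℝ :=
  if ∀ n p, O n = some p → W n = p then
    3 ^ weight O *
      ∏ n ∈ Finset.univ.filter (fun n => O n ≠ none), (if lam n then (1 : ℝ) else -1)
  else 0

/-- Born probability of outcome `lam` when measuring `ρ` in the product basis `W`. -/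
def born {N : ℕ} (ρ : Matrix (Fin N → Fin 2) (Fin N → Fin 2) ℂ)
    (W : Fin N → Fin 3) (lam : Fin N → Bool) : ℝ :=
  ((ρ * projN W lam).trace).re

/-- A randomized-measurement data set: for each of `B × K` experimental runs,
a uniformly random measurement setting and the observed outcome string. -/
abbrev RMData (N B K : ℕ) := Fin B × Fin K → ((Fin N → Fin 3) × (Fin N → Bool))

/-- Probability mass of a data set: settings i.i.d. uniform on `{X,Y,Z}^N`,
outcomes distributed by Born's rule given the setting. -/
def rmMass {N B K : ℕ} (ρ : Matrix (Fin N → Fin 2) (Fin N → Fin 2) ℂ)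
    (ω : RMData N B K) : ℝ :=
  ∏ r : Fin B × Fin K, ((3 : ℝ)⁻¹ ^ N * born ρ (ω r).1 (ω r).2)

/-- The median of `B` reals (the middle element of the sorted list). -/
def medianFin {B : ℕ} (f : Fin B → ℝ) : ℝ :=
  ((List.ofFn f).insertionSort (· ≤ ·)).getD (B / 2) 0

/-- Median-of-means shadow estimator of `tr(O ρ)` from the data set `ω`. -/
def momEst {N B K : ℕ} (O : Fin N → Option (Fin 3)) (ω : RMData N B K) : ℝ :=
  medianFin fun b : Fin B => (∑ k : Fin K, shadowEst O (ω (b, k)).1 (ω (b, k)).2) / K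


-- ### Auxiliary probability lemmas ###
open Finset



variable {S : Type*} [Fintype S]

lemma sum_prod_pi {ι : Type*} [Fintype ι] [DecidableEq ι] (h : ι → S → ℝ) :
    ∑ ω : ι → S, ∏ i, h i (ω i) = ∏ i, ∑ σ, h i σ := by
  classical
  rw [Finset.prod_univ_sum]
  rfl

/-- Chebyshev for the mean of K iid samples. -/
lemma chebyshev_batch (p : S → ℝ) (hp0 : ∀ σ, 0 ≤ p σ) (hp1 : ∑ σ, p σ = 1)
    (f : S → ℝ) (μ V ε : ℝ) (hε : 0 < ε)
    (hmean : ∑ σ, p σ * f σ = μ) (hvar : ∑ σ, p σ * (f σ - μ) ^ 2 ≤ V)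
    (K : ℕ) (hK : 0 < K) :
    ∑ ω ∈ Finset.univ.filter (fun ω : Fin K → S =>
        ε < |(∑ k, f (ω k)) / K - μ|), ∏ k, p (ω k) ≤ V / (K * ε ^ 2) := by
  classical
  set g : S → ℝ := fun σ => f σ - μ with hg
  have hKR : (0:ℝ) < K := by exact_mod_cast hK
  have hgmean : ∑ σ, p σ * g σ = 0 := by
    simp only [hg, mul_sub, Finset.sum_sub_distrib, hmean, ← Finset.sum_mul, hp1]
    ring
  set M2 : ℝ := ∑ σ, p σ * g σ ^ 2 with hM2
  have hM2V : M2 ≤ V := hvar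
  have hM2nn : 0 ≤ M2 := Finset.sum_nonneg fun σ _ => mul_nonneg (hp0 σ) (sq_nonneg _)
  set h : Fin K → Fin K → Fin K → S → ℝ := fun k k' j σ =>
    p σ * (if j = k then g σ else 1) * (if j = k' then g σ else 1) with hh
  -- second moment of the sum
  have key : ∑ ω : Fin K → S, (∏ k, p (ω k)) * (∑ k, g (ω k)) ^ 2
      ≤ K * V := by
    have expand : ∀ ω : Fin K → S, (∏ k, p (ω k)) * (∑ k, g (ω k)) ^ 2
        = ∑ k, ∑ k', (∏ j, h k k' j (ω j)) := by
      intro ω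
      have h1 : ∀ k k' : Fin K, (∏ j, h k k' j (ω j))
          = (∏ j, p (ω j)) * ((∏ j, (if j = k then g (ω j) else 1))
            * (∏ j, (if j = k' then g (ω j) else 1))) := by
        intro k k'
        rw [hh]
        simp only []
        rw [← Finset.prod_mul_distrib, ← Finset.prod_mul_distrib]
        exact Finset.prod_congr rfl fun j _ => by ring
      simp only [h1, Finset.prod_ite_eq', Finset.mem_univ, if_true]
      rw [sq, Finset.sum_mul_sum, Finset.mul_sum]
      refine Finset.sum_congr rfl fun k _ => ?_
      rw [Finset.mul_sum]
    simp only [expand]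
    rw [Finset.sum_comm]
    have swap2 : ∀ k : Fin K, ∑ ω : Fin K → S, ∑ k', (∏ j, h k k' j (ω j))
        = ∑ k', ∑ ω : Fin K → S, (∏ j, h k k' j (ω j)) := fun k => Finset.sum_comm
    rw [Finset.sum_congr rfl fun k _ => swap2 k]
    have hfac : ∀ k k' : Fin K, ∑ ω : Fin K → S, (∏ j, h k k' j (ω j))
        = ∏ j, ∑ σ, h k k' j σ := fun k k' => sum_prod_pi _
    have hval : ∀ k k' : Fin K, (∑ ω : Fin K → S, ∏ j, h k k' j (ω j))
        = if k' = k then M2 else 0 := by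
      intro k k'
      rw [hfac]
      by_cases hkk : k' = k
      · subst hkk
        rw [if_pos rfl]
        have hthis : ∀ j, (∑ σ, h k' k' j σ) = if j = k' then M2 else 1 := by
          intro j
          by_cases hj : j = k'
          · subst hj
            rw [if_pos rfl, hM2]
            refine Finset.sum_congr rfl fun σ _ => ?_
            simp only [hh, eq_self_iff_true, if_true, if_pos rfl]
            ring
          · rw [if_neg hj]
            simp only [hh, if_neg hj, mul_one]
            exact hp1
        simp only [hthis]
        simp
      · rw [if_neg hkk]
        apply Finset.prod_eq_zero (Finset.mem_univ k)
        have : ∀ σ, h k k' k σ = p σ * g σ := by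
          intro σ; simp [hh, Ne.symm hkk]
        simp only [this, hgmean]
    simp only [hval]
    simp only [Finset.sum_ite_eq', Finset.mem_univ, if_true]
    rw [Finset.sum_const, Finset.card_univ, Fintype.card_fin, nsmul_eq_mul]
    exact mul_le_mul_of_nonneg_left hM2V (by positivity)
  -- Markov
  have markov : ∑ ω ∈ Finset.univ.filter (fun ω : Fin K → S =>
        ε < |(∑ k, f (ω k)) / K - μ|), ∏ k, p (ω k)
      ≤ (∑ ω : Fin K → S, (∏ k, p (ω k)) * (∑ k, g (ω k)) ^ 2) / (K ^ 2 * ε ^ 2) := by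
    rw [Finset.sum_div]
    rw [← Finset.sum_filter_add_sum_filter_not Finset.univ
      (fun ω : Fin K → S => ε < |(∑ k, f (ω k)) / K - μ|)]
    have h2 : (0:ℝ) ≤ ∑ ω ∈ Finset.univ.filter (fun ω : Fin K → S =>
        ¬ ε < |(∑ k, f (ω k)) / K - μ|), (∏ k, p (ω k)) * (∑ k, g (ω k)) ^ 2 / (K ^ 2 * ε ^ 2) := by
      apply Finset.sum_nonneg; intro ω _
      have := Finset.prod_nonneg (fun k (_ : k ∈ Finset.univ) => hp0 (ω k))
      positivity
    refine le_add_of_le_of_nonneg (Finset.sum_le_sum ?_) h2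
    intro ω hω
    rw [Finset.mem_filter] at hω
    have hdev : ε < |(∑ k, g (ω k))| / K := by
      have : (∑ k, f (ω k)) / K - μ = (∑ k, g (ω k)) / K := by
        rw [hg]; rw [Finset.sum_sub_distrib]; push_cast; field_simp; simp
      rw [this] at hω
      rcases hω with ⟨-, hω⟩
      rwa [abs_div, abs_of_pos hKR] at hω
    have hsq : K ^ 2 * ε ^ 2 < (∑ k, g (ω k)) ^ 2 := by
      have h1 : K * ε < |∑ k, g (ω k)| := by
        rw [lt_div_iff₀ hKR] at hdev; linarith [hdev]
      have h2 : 0 ≤ K * ε := by positivity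
      calc K ^ 2 * ε ^ 2 = (K * ε) ^ 2 := by ring
        _ < |∑ k, g (ω k)| ^ 2 := by
            apply pow_lt_pow_left₀ h1 h2; norm_num
        _ = (∑ k, g (ω k)) ^ 2 := sq_abs _
    have hP : 0 ≤ ∏ k, p (ω k) := Finset.prod_nonneg (fun k _ => hp0 (ω k))
    rw [le_div_iff₀ (by positivity)]
    nlinarith [hsq, hP]
  calc _ ≤ _ := markov
    _ ≤ (K * V) / (K ^ 2 * ε ^ 2) := by
        apply div_le_div_of_nonneg_right key (by positivity) |>.trans_eq rfl
    _ = V / (K * ε ^ 2) := by field_simp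




lemma countP_ofFn_eq {B : ℕ} (X : Fin B → ℝ) (q : ℝ → Prop) [DecidablePred q] :
    ((List.ofFn X).countP fun x => decide (q x))
      = (Finset.univ.filter fun b => q (X b)).card := by
  classical
  have h0 : ((List.ofFn X : List ℝ) : Multiset ℝ) = Finset.univ.val.map X :=
    (Fin.univ_val_map X).symm
  have h1 : ((List.ofFn X).countP fun x => decide (q x))
      = Multiset.countP q ((List.ofFn X : List ℝ) : Multiset ℝ) := rfl
  rw [h1, h0, Multiset.countP_map]
  rfl

lemma sorted_count_lt {s : List ℝ} (hs : List.Pairwise (· ≤ ·) s) {i : ℕ}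
    (hi : i < s.length) {c : ℝ} (h : s.get ⟨i, hi⟩ < c) :
    i + 1 ≤ s.countP fun x => decide (x < c) := by
  have hsplit : s.countP (fun x => decide (x < c))
      = (s.take (i+1)).countP (fun x => decide (x < c))
        + (s.drop (i+1)).countP (fun x => decide (x < c)) := by
    rw [← List.countP_append, List.take_append_drop]
  have hall : ∀ x ∈ s.take (i+1), x < c := by
    intro x hx
    obtain ⟨j, hj, hxj⟩ := List.mem_iff_getElem.mp hx
    have hj2 : j < s.length ∧ j ≤ i := by rw [List.length_take] at hj; omega
    rw [List.getElem_take] at hxj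
    have hle : s.get ⟨j, hj2.1⟩ ≤ s.get ⟨i, hi⟩ :=
      hs.rel_get_of_le (Fin.mk_le_mk.mpr hj2.2)
    calc x = s.get ⟨j, hj2.1⟩ := by rw [← hxj]; rfl
      _ ≤ s.get ⟨i, hi⟩ := hle
      _ < c := h
  have htake : (s.take (i+1)).countP (fun x => decide (x < c)) = i + 1 := by
    rw [List.countP_eq_length.mpr (fun a ha => decide_eq_true (hall a ha))]
    rw [List.length_take]
    omega
  omega

lemma sorted_count_gt {s : List ℝ} (hs : List.Pairwise (· ≤ ·) s) {i : ℕ}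
    (hi : i < s.length) {c : ℝ} (h : c < s.get ⟨i, hi⟩) :
    s.length - i ≤ s.countP fun x => decide (c < x) := by
  have hsplit : s.countP (fun x => decide (c < x))
      = (s.take i).countP (fun x => decide (c < x))
        + (s.drop i).countP (fun x => decide (c < x)) := by
    rw [← List.countP_append, List.take_append_drop]
  have hall : ∀ x ∈ s.drop i, c < x := by
    intro x hx
    obtain ⟨j, hj, hxj⟩ := List.mem_iff_getElem.mp hx
    have hj2 : i + j < s.length := by rw [List.length_drop] at hj; omega
    rw [List.getElem_drop] at hxj
    have hle : s.get ⟨i, hi⟩ ≤ s.get ⟨i + j, hj2⟩ :=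
      hs.rel_get_of_le (Fin.mk_le_mk.mpr (Nat.le_add_right i j))
    calc c < s.get ⟨i, hi⟩ := h
      _ ≤ s.get ⟨i + j, hj2⟩ := hle
      _ = x := by rw [← hxj]; rfl
  have hdrop : (s.drop i).countP (fun x => decide (c < x)) = s.length - i := by
    rw [List.countP_eq_length.mpr (fun a ha => decide_eq_true (hall a ha))]
    rw [List.length_drop]
  omega

lemma medianFin_close {B : ℕ} (X : Fin B → ℝ) (μ ε : ℝ)
    (hG : B / 2 + 1 ≤ (Finset.univ.filter fun b => |X b - μ| ≤ ε).card) :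
    |medianFin X - μ| ≤ ε := by
  classical
  set s : List ℝ := (List.ofFn X).insertionSort (· ≤ ·) with hsdef
  have hsort : List.Pairwise (· ≤ ·) s := List.pairwise_insertionSort _ _
  have hperm : s.Perm (List.ofFn X) := List.perm_insertionSort _ _
  have hlen : s.length = B := by rw [hperm.length_eq, List.length_ofFn]
  have hcard : (Finset.univ.filter fun b => |X b - μ| ≤ ε).card ≤ B := by
    simpa using Finset.card_filter_le Finset.univ (fun b => |X b - μ| ≤ ε)
  have hB : B / 2 < B := by omega
  have hi : B / 2 < s.length := by omega
  have hmed : medianFin X = s.get ⟨B / 2, hi⟩ := by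
    rw [medianFin, ← hsdef, List.getD_eq_getElem s 0 hi]
    rfl
  set a : ℝ := s.get ⟨B / 2, hi⟩ with ha
  -- counts transfer
  have htrans : ∀ (q : ℝ → Prop) (_ : DecidablePred q),
      (s.countP fun x => decide (q x)) = (Finset.univ.filter fun b => q (X b)).card := by
    intro q hq
    rw [hperm.countP_eq, countP_ofFn_eq]
  rw [hmed]
  by_contra hcon
  rw [not_le, lt_abs] at hcon
  rcases hcon with hcon | hcon
  · -- a - μ > ε, i.e. μ + ε < a
    have h1 : B - B / 2 ≤ s.countP fun x => decide (μ + ε < x) := by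
      have := sorted_count_gt (c := μ + ε) hsort hi (by rw [← ha]; linarith)
      omega
    rw [htrans _ inferInstance] at h1
    have hdisj : Disjoint (Finset.univ.filter fun b => μ + ε < X b)
        (Finset.univ.filter fun b => |X b - μ| ≤ ε) := by
      rw [Finset.disjoint_filter]
      intro b _ hb
      rw [abs_le]
      intro hc
      linarith [hc.2]
    have := Finset.card_union_of_disjoint hdisj
    have hle : ((Finset.univ.filter fun b => μ + ε < X b)
        ∪ (Finset.univ.filter fun b => |X b - μ| ≤ ε)).card ≤ B := by
      have := Finset.card_le_univ ((Finset.univ.filter fun b => μ + ε < X b)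
        ∪ (Finset.univ.filter fun b => |X b - μ| ≤ ε))
      simpa using this
    omega
  · -- -(a - μ) > ε, i.e. a < μ - ε
    have h1 : B / 2 + 1 ≤ s.countP fun x => decide (x < μ - ε) :=
      sorted_count_lt (c := μ - ε) hsort hi (by rw [← ha]; linarith)
    rw [htrans _ inferInstance] at h1
    have hdisj : Disjoint (Finset.univ.filter fun b => X b < μ - ε)
        (Finset.univ.filter fun b => |X b - μ| ≤ ε) := by
      rw [Finset.disjoint_filter]
      intro b _ hb
      rw [abs_le]
      intro hc
      linarith [hc.1]
    have := Finset.card_union_of_disjoint hdisj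
    have hle : ((Finset.univ.filter fun b => X b < μ - ε)
        ∪ (Finset.univ.filter fun b => |X b - μ| ≤ ε)).card ≤ B := by
      have := Finset.card_le_univ ((Finset.univ.filter fun b => X b < μ - ε)
        ∪ (Finset.univ.filter fun b => |X b - μ| ≤ ε))
      simpa using this
    omega

/-- Median-of-means concentration on a finite product space. -/
lemma mom_bound {S : Type*} [Fintype S] (p : S → ℝ) (hp0 : ∀ σ, 0 ≤ p σ)
    (hp1 : ∑ σ, p σ = 1) (f : S → ℝ) (μ V ε : ℝ) (hε : 0 < ε) (hV : 0 ≤ V)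
    (hmean : ∑ σ, p σ * f σ = μ) (hvar : ∑ σ, p σ * (f σ - μ) ^ 2 ≤ V)
    (B K : ℕ) (hK : 0 < K) :
    ∑ ω ∈ Finset.univ.filter (fun ω : Fin B × Fin K → S =>
        ε < |medianFin (fun b => (∑ k, f (ω (b, k))) / K) - μ|), ∏ r, p (ω r)
      ≤ 2 ^ B * (V / (K * ε ^ 2)) ^ (B - B / 2) := by
  classical
  set m : ℕ := B - B / 2 with hm
  set t : ℝ := V / (K * ε ^ 2) with ht
  have htnn : 0 ≤ t := by
    have : (0:ℝ) < K := by exact_mod_cast hK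
    positivity
  set q : ℝ := ∑ ω₁ ∈ Finset.univ.filter (fun ω₁ : Fin K → S =>
      ε < |(∑ k, f (ω₁ k)) / K - μ|), ∏ k, p (ω₁ k) with hq
  have hqt : q ≤ t := chebyshev_batch p hp0 hp1 f μ V ε hε hmean hvar K hK
  have hq0 : 0 ≤ q :=
    Finset.sum_nonneg fun ω₁ _ => Finset.prod_nonneg fun k _ => hp0 (ω₁ k)
  set bad : Fin B → (Fin B × Fin K → S) → Prop :=
    fun b ω => ε < |(∑ k, f (ω (b, k))) / K - μ| with hbad
  have hPnn : ∀ ω : Fin B × Fin K → S, 0 ≤ ∏ r, p (ω r) :=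
    fun ω => Finset.prod_nonneg fun r _ => hp0 (ω r)
  -- failure implies many bad batches
  have hmany : ∀ ω : Fin B × Fin K → S,
      ε < |medianFin (fun b => (∑ k, f (ω (b, k))) / K) - μ| →
      m ≤ (Finset.univ.filter fun b => bad b ω).card := by
    intro ω hfail
    by_contra hc
    push_neg at hc
    have hgood : B / 2 + 1
        ≤ (Finset.univ.filter fun b => |(∑ k, f (ω (b, k))) / K - μ| ≤ ε).card := by
      have h1 : (Finset.univ.filter fun b => bad b ω).card
          + (Finset.univ.filter fun b => ¬ bad b ω).card = B := by
        rw [Finset.card_filter_add_card_filter_not]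
        simp
      have h2 : (Finset.univ.filter fun b => ¬ bad b ω)
          = (Finset.univ.filter fun b => |(∑ k, f (ω (b, k))) / K - μ| ≤ ε) := by
        apply Finset.filter_congr
        intro b _
        rw [hbad]
        simp [not_lt]
      rw [h2] at h1
      omega
    exact absurd hfail (not_lt.mpr (medianFin_close _ μ ε hgood))
  -- indicator over subsets of size m
  have hind : ∀ ω : Fin B × Fin K → S,
      ε < |medianFin (fun b => (∑ k, f (ω (b, k))) / K) - μ| →
      (1:ℝ) ≤ ∑ T ∈ Finset.powersetCard m (Finset.univ : Finset (Fin B)),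
          (if ∀ b ∈ T, bad b ω then (1:ℝ) else 0) := by
    intro ω hfail
    obtain ⟨T, hTsub, hTcard⟩ := Finset.exists_subset_card_eq (hmany ω hfail)
    have hTmem : T ∈ Finset.powersetCard m (Finset.univ : Finset (Fin B)) := by
      rw [Finset.mem_powersetCard]
      exact ⟨Finset.subset_univ T, hTcard⟩
    calc (1:ℝ) = ∑ T' ∈ {T}, (if ∀ b ∈ T', bad b ω then (1:ℝ) else 0) := by
          rw [Finset.sum_singleton, if_pos]
          intro b hb
          have := hTsub hb
          rw [Finset.mem_filter] at this
          exact this.2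
      _ ≤ _ := by
          apply Finset.sum_le_sum_of_subset_of_nonneg
          · rw [Finset.singleton_subset_iff]; exact hTmem
          · intro T' _ _; split <;> norm_num
  -- probability that all batches in T are bad is q ^ m
  have hfactor : ∀ T ∈ Finset.powersetCard m (Finset.univ : Finset (Fin B)),
      ∑ ω : Fin B × Fin K → S, (if ∀ b ∈ T, bad b ω then (1:ℝ) else 0) * ∏ r, p (ω r)
        = q ^ m := by
    intro T hT
    rw [Finset.mem_powersetCard] at hT
    have hmain : ∀ ω : Fin B × Fin K → S,
        (if ∀ b ∈ T, bad b ω then (1:ℝ) else 0) * ∏ r, p (ω r)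
        = ∏ b : Fin B, ((if b ∈ T then (if bad b ω then (1:ℝ) else 0) else 1)
            * ∏ k : Fin K, p (ω (b, k))) := by
      intro ω
      rw [Finset.prod_mul_distrib]
      congr 1
      · rw [Finset.prod_ite_mem, Finset.univ_inter, Finset.prod_boole]
        congr 1
      · exact Fintype.prod_prod_type _

    simp only [hmain]
    -- reindex by currying
    have heq : ∑ ω : Fin B × Fin K → S,
        ∏ b : Fin B, ((if b ∈ T then (if bad b ω then (1:ℝ) else 0) else 1)
          * ∏ k : Fin K, p (ω (b, k)))
        = ∑ τ : Fin B → Fin K → S,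
          ∏ b : Fin B, ((if b ∈ T then (if ε < |(∑ k, f (τ b k)) / K - μ| then (1:ℝ) else 0) else 1)
            * ∏ k : Fin K, p (τ b k)) :=
      Fintype.sum_equiv (Equiv.curry (Fin B) (Fin K) S) _ _ (fun ω => rfl)
    rw [heq]
    rw [sum_prod_pi (fun (b : Fin B) (ω₁ : Fin K → S) =>
      (if b ∈ T then (if ε < |(∑ k, f (ω₁ k)) / K - μ| then (1:ℝ) else 0) else 1)
        * ∏ k : Fin K, p (ω₁ k))]
    have hone : ∀ b : Fin B, (∑ ω₁ : Fin K → S,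
        ((if b ∈ T then (if ε < |(∑ k, f (ω₁ k)) / K - μ| then (1:ℝ) else 0) else 1)
          * ∏ k : Fin K, p (ω₁ k))) = if b ∈ T then q else 1 := by
      intro b
      by_cases hb : b ∈ T
      · rw [if_pos hb, hq]
        rw [Finset.sum_filter]
        exact Finset.sum_congr rfl fun ω₁ _ => by rw [if_pos hb, ite_mul, one_mul, zero_mul]
      · rw [if_neg hb]
        simp only [if_neg hb, one_mul]
        rw [sum_prod_pi (fun (_ : Fin K) σ => p σ)]
        simp [hp1]
    simp only [hone]
    rw [Finset.prod_ite_mem, Finset.univ_inter, Finset.prod_const, hT.2]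
  -- assemble
  have step1 : ∑ ω ∈ Finset.univ.filter (fun ω : Fin B × Fin K → S =>
        ε < |medianFin (fun b => (∑ k, f (ω (b, k))) / K) - μ|), ∏ r, p (ω r)
      ≤ ∑ ω : Fin B × Fin K → S,
          (∑ T ∈ Finset.powersetCard m (Finset.univ : Finset (Fin B)),
            (if ∀ b ∈ T, bad b ω then (1:ℝ) else 0)) * ∏ r, p (ω r) := by
    rw [← Finset.sum_filter_add_sum_filter_not Finset.univ
      (fun ω : Fin B × Fin K → S =>
        ε < |medianFin (fun b => (∑ k, f (ω (b, k))) / K) - μ|)]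
    have hnn2 : (0:ℝ) ≤ ∑ ω ∈ Finset.univ.filter (fun ω : Fin B × Fin K → S =>
        ¬ ε < |medianFin (fun b => (∑ k, f (ω (b, k))) / K) - μ|),
          (∑ T ∈ Finset.powersetCard m (Finset.univ : Finset (Fin B)),
            (if ∀ b ∈ T, bad b ω then (1:ℝ) else 0)) * ∏ r, p (ω r) := by
      apply Finset.sum_nonneg
      intro ω _
      apply mul_nonneg _ (hPnn ω)
      apply Finset.sum_nonneg
      intro T _
      split <;> norm_num
    refine le_add_of_le_of_nonneg (Finset.sum_le_sum ?_) hnn2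
    intro ω hω
    rw [Finset.mem_filter] at hω
    have h1 := hind ω hω.2
    nlinarith [hPnn ω, h1]
  calc _ ≤ _ := step1
    _ = ∑ T ∈ Finset.powersetCard m (Finset.univ : Finset (Fin B)),
          ∑ ω : Fin B × Fin K → S,
            (if ∀ b ∈ T, bad b ω then (1:ℝ) else 0) * ∏ r, p (ω r) := by
        rw [Finset.sum_comm]
        exact Finset.sum_congr rfl fun ω _ => by rw [Finset.sum_mul]
    _ = ∑ T ∈ Finset.powersetCard m (Finset.univ : Finset (Fin B)), q ^ m :=
        Finset.sum_congr rfl hfactor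
    _ = (Finset.powersetCard m (Finset.univ : Finset (Fin B))).card • q ^ m :=
        (Finset.sum_const _)
    _ ≤ 2 ^ B * t ^ m := by
        rw [nsmul_eq_mul]
        have hcard : (Finset.powersetCard m (Finset.univ : Finset (Fin B))).card ≤ 2 ^ B := by
          have hsub : Finset.powersetCard m (Finset.univ : Finset (Fin B))
              ⊆ Finset.powerset Finset.univ := fun T hT =>
            Finset.mem_powerset.mpr (Finset.mem_powersetCard.mp hT).1
          have := Finset.card_le_card hsub
          rwa [Finset.card_powerset, Finset.card_univ, Fintype.card_fin] at this
        have hqm : q ^ m ≤ t ^ m := pow_le_pow_left₀ hq0 hqt m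
        have h2 : (0:ℝ) ≤ q ^ m := pow_nonneg hq0 m
        calc ((Finset.powersetCard m (Finset.univ : Finset (Fin B))).card : ℝ) * q ^ m
            ≤ (2 ^ B : ℝ) * q ^ m := by
              apply mul_le_mul_of_nonneg_right _ h2
              exact_mod_cast hcard
          _ ≤ 2 ^ B * t ^ m := mul_le_mul_of_nonneg_left hqm (by positivity)

-- ### Auxiliary quantum lemmas ###
def pvec : Fin 3 → Bool → Fin 2 → ℂ
  | 0, true => ![((Real.sqrt 2)⁻¹ : ℝ), ((Real.sqrt 2)⁻¹ : ℝ)]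
  | 0, false => ![((Real.sqrt 2)⁻¹ : ℝ), -((Real.sqrt 2)⁻¹ : ℝ)]
  | 1, true => ![((Real.sqrt 2)⁻¹ : ℝ), ((Real.sqrt 2)⁻¹ : ℝ) * Complex.I]
  | 1, false => ![((Real.sqrt 2)⁻¹ : ℝ), -(((Real.sqrt 2)⁻¹ : ℝ) * Complex.I)]
  | 2, true => ![1, 0]
  | 2, false => ![0, 1]

lemma pauliProj_outer (w : Fin 3) (b : Bool) (i j : Fin 2) :
    pauliProj w b i j = pvec w b i * (starRingEnd ℂ) (pvec w b j) := by
  have hr : ((Real.sqrt 2)⁻¹ : ℝ) * (Real.sqrt 2)⁻¹ = (2:ℝ)⁻¹ := by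
    rw [← mul_inv, Real.mul_self_sqrt (by norm_num : (0:ℝ) ≤ 2)]
  have hc : ((((Real.sqrt 2)⁻¹ : ℝ)) : ℂ) * ((((Real.sqrt 2)⁻¹ : ℝ)) : ℂ) = (2 : ℂ)⁻¹ := by
    rw [← Complex.ofReal_mul, hr]
    push_cast
    ring
  fin_cases w <;> fin_cases b <;> fin_cases i <;> fin_cases j <;>
    simp [pauliProj, pvec, PauliXYZ, Matrix.one_apply, Matrix.smul_apply, Matrix.add_apply,
      Complex.ext_iff, _root_.map_mul, Complex.conj_ofReal] <;>
    (try rw [← hc]) <;> push_cast <;> ring_nf <;>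
    simp [Complex.ext_iff] <;> ring_nf







lemma pauliProj_sum (w : Fin 3) : ∑ b : Bool, pauliProj w b = 1 := by
  rw [Fintype.sum_bool]
  simp only [pauliProj, if_pos, if_neg, Bool.false_eq_true, ite_true, ite_false]
  module

lemma pauliProj_signed_sum (w : Fin 3) :
    ∑ b : Bool, (if b then (1:ℂ) else -1) • pauliProj w b = PauliXYZ w := by
  rw [Fintype.sum_bool]
  simp only [pauliProj, if_pos, if_neg, Bool.false_eq_true, ite_true, ite_false]
  module

lemma pauliProj_sum_apply (w : Fin 3) (i j : Fin 2) :
    ∑ b : Bool, pauliProj w b i j = (1 : Matrix (Fin 2) (Fin 2) ℂ) i j := by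
  rw [← pauliProj_sum w]
  simp [Finset.sum_apply]

lemma pauliProj_signed_sum_apply (w : Fin 3) (i j : Fin 2) :
    ∑ b : Bool, (if b then (1:ℂ) else -1) * pauliProj w b i j = PauliXYZ w i j := by
  rw [← pauliProj_signed_sum w]
  simp [Finset.sum_apply, Matrix.smul_apply]

variable {N : ℕ} (ρ : Matrix (Fin N → Fin 2) (Fin N → Fin 2) ℂ)

lemma born_nonneg (hρ : ρ.PosSemidef) (W : Fin N → Fin 3) (lam : Fin N → Bool) :
    0 ≤ born ρ W lam := by
  set V : (Fin N → Fin 2) → ℂ := fun x => ∏ n, pvec (W n) (lam n) (x n) with hV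
  have hproj : ∀ x y, projN W lam x y = V x * (starRingEnd ℂ) (V y) := by
    intro x y
    rw [hV]
    simp only [projN]
    rw [map_prod, ← Finset.prod_mul_distrib]
    exact Finset.prod_congr rfl fun n _ => pauliProj_outer _ _ _ _
  have htr : (ρ * projN W lam).trace = dotProduct (star V) (ρ.mulVec V) := by
    simp only [Matrix.trace, Matrix.diag, Matrix.mul_apply, dotProduct, Matrix.mulVec,
      Pi.star_apply, RCLike.star_def, hproj, Finset.mul_sum]
    refine Finset.sum_congr rfl fun x _ => Finset.sum_congr rfl fun y _ => by ring
  have hpos := hρ.dotProduct_mulVec_nonneg V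
  rw [born, htr]
  have := (Complex.le_def.mp hpos).1
  simpa using this

lemma one_entry_prod (x y : Fin N → Fin 2) :
    ∏ n, (1 : Matrix (Fin 2) (Fin 2) ℂ) (x n) (y n)
      = (1 : Matrix (Fin N → Fin 2) (Fin N → Fin 2) ℂ) x y := by
  simp only [Matrix.one_apply]
  rw [Finset.prod_boole]
  have h : (∀ i ∈ Finset.univ, x i = y i) ↔ x = y := by
    simp [funext_iff]
  simp only [h]

lemma projN_sum_apply (W : Fin N → Fin 3) (x y : Fin N → Fin 2) :
    ∑ lam : Fin N → Bool, projN W lam x y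
      = (1 : Matrix (Fin N → Fin 2) (Fin N → Fin 2) ℂ) x y := by
  simp only [projN]
  rw [← Fintype.piFinset_univ,
    ← Finset.prod_univ_sum (t := fun _ => (Finset.univ : Finset Bool))
      (f := fun n b => pauliProj (W n) b (x n) (y n))]
  rw [← one_entry_prod x y]
  exact Finset.prod_congr rfl fun n _ => pauliProj_sum_apply (W n) (x n) (y n)

lemma sum_born (htrace : ρ.trace = 1) (W : Fin N → Fin 3) :
    ∑ lam : Fin N → Bool, born ρ W lam = 1 := by
  have h1 : ∑ lam : Fin N → Bool, (ρ * projN W lam).trace = (1 : ℂ) := by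
    have h2 : ∑ lam : Fin N → Bool, (ρ * projN W lam).trace = (ρ * 1).trace := by
      simp only [Matrix.trace, Matrix.diag, Matrix.mul_apply]
      rw [Finset.sum_comm]
      refine Finset.sum_congr rfl fun x _ => ?_
      rw [Finset.sum_comm]
      refine Finset.sum_congr rfl fun y _ => ?_
      rw [← Finset.mul_sum, projN_sum_apply]
    rw [h2, mul_one, htrace]
  have h3 : ∑ lam : Fin N → Bool, born ρ W lam
      = (∑ lam : Fin N → Bool, (ρ * projN W lam).trace).re := by
    rw [Complex.re_sum]
    rfl
  rw [h3, h1]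
  simp

lemma mass_total (htrace : ρ.trace = 1) :
    ∑ σ : (Fin N → Fin 3) × (Fin N → Bool), (3:ℝ)⁻¹ ^ N * born ρ σ.1 σ.2 = 1 := by
  rw [Fintype.sum_prod_type]
  have h1 : ∀ W : Fin N → Fin 3,
      ∑ lam : Fin N → Bool, (3:ℝ)⁻¹ ^ N * born ρ W lam = (3:ℝ)⁻¹ ^ N := by
    intro W
    rw [← Finset.mul_sum, sum_born ρ htrace, mul_one]
  simp only [h1]
  rw [Finset.sum_const, Finset.card_univ, nsmul_eq_mul]
  have : (Fintype.card (Fin N → Fin 3) : ℝ) = 3 ^ N := by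
    rw [Fintype.card_fun]
    simp
  rw [this]
  rw [inv_pow]
  field_simp

lemma weight_le (O : Fin N → Option (Fin 3)) : weight O ≤ N := by
  have := Finset.card_filter_le Finset.univ (fun n => O n ≠ none)
  simpa [weight] using this

lemma compat_card (O : Fin N → Option (Fin 3)) :
    (Finset.univ.filter fun W : Fin N → Fin 3 => ∀ n p, O n = some p → W n = p).card
      = 3 ^ (N - weight O) := by
  classical
  have hset : (Finset.univ.filter fun W : Fin N → Fin 3 => ∀ n p, O n = some p → W n = p)
      = Fintype.piFinset (fun n => (O n).elim Finset.univ (fun pa => {pa})) := by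
    ext W
    simp only [Finset.mem_filter, Finset.mem_univ, true_and, Fintype.mem_piFinset]
    constructor
    · intro h n
      cases hO : O n with
      | none => simp [hO]
      | some pa => simp [hO, h n pa hO]
    · intro h n pa hO
      have := h n
      rw [hO] at this
      simpa using this
  rw [hset, Fintype.card_piFinset]
  have hterm : ∀ n : Fin N, ((O n).elim Finset.univ (fun pa => ({pa} : Finset (Fin 3)))).card
      = if O n = none then 3 else 1 := by
    intro n
    cases hO : O n with
    | none => simp [hO]
    | some pa => simp [hO]
  simp only [hterm]
  rw [← Finset.prod_filter_mul_prod_filter_not Finset.univ (fun n => O n = none)]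
  have hA : ∏ n ∈ Finset.univ.filter (fun n => O n = none), (if O n = none then (3:ℕ) else 1)
      = 3 ^ (Finset.univ.filter (fun n : Fin N => O n = none)).card := by
    rw [Finset.prod_congr rfl (fun n hn => if_pos (Finset.mem_filter.mp hn).2),
      Finset.prod_const]
  have hB : ∏ n ∈ Finset.univ.filter (fun n => ¬ O n = none), (if O n = none then (3:ℕ) else 1)
      = 1 := by
    rw [Finset.prod_congr rfl (fun n hn => if_neg (Finset.mem_filter.mp hn).2)]
    simp
  rw [hA, hB, mul_one]
  congr 1
  have h1 : (Finset.univ.filter (fun n : Fin N => O n = none)).card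
      + (Finset.univ.filter (fun n : Fin N => ¬ O n = none)).card = N := by
    rw [Finset.card_filter_add_card_filter_not]
    simp
  have h2 : (Finset.univ.filter (fun n : Fin N => ¬ O n = none)).card = weight O := rfl
  omega

lemma signed_born_sum (O : Fin N → Option (Fin 3)) (W : Fin N → Fin 3)
    (hW : ∀ n p, O n = some p → W n = p) :
    ∑ lam : Fin N → Bool, born ρ W lam
        * ∏ n ∈ Finset.univ.filter (fun n => O n ≠ none), (if lam n then (1:ℝ) else -1)
      = ((obsMat O * ρ).trace).re := by
  classical
  -- complex version
  have hqbit : ∀ (n : Fin N) (i j : Fin 2),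
      ∑ b : Bool, pauliProj (W n) b i j
          * (if O n ≠ none then (if b then (1:ℂ) else -1) else 1)
        = pauliOfOpt (O n) i j := by
    intro n i j
    cases hO : O n with
    | none =>
        simp only [hO, ne_eq, not_true_eq_false, if_false, mul_one]
        rw [pauliProj_sum_apply]
        simp [pauliOfOpt]
    | some pa =>
        have hWn : W n = pa := hW n pa hO
        simp only [hO, ne_eq, reduceCtorEq, not_false_eq_true, if_true, hWn]
        have : pauliOfOpt (some pa) = PauliXYZ pa := rfl
        rw [this, ← pauliProj_signed_sum_apply pa i j]
        exact Finset.sum_congr rfl fun b _ => by ring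
  have hcplx : ∑ lam : Fin N → Bool, (ρ * projN W lam).trace
        * ∏ n ∈ Finset.univ.filter (fun n => O n ≠ none), (if lam n then (1:ℂ) else -1)
      = (ρ * obsMat O).trace := by
    have hext : ∀ lam : Fin N → Bool,
        (∏ n ∈ Finset.univ.filter (fun n => O n ≠ none), (if lam n then (1:ℂ) else -1))
        = ∏ n, (if O n ≠ none then (if lam n then (1:ℂ) else -1) else 1) :=
      fun lam => Finset.prod_filter _ _
    simp only [hext, Matrix.trace, Matrix.diag, Matrix.mul_apply, Finset.sum_mul]
    rw [Finset.sum_comm]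
    refine Finset.sum_congr rfl fun x _ => ?_
    rw [Finset.sum_comm]
    refine Finset.sum_congr rfl fun y _ => ?_
    have hswap : ∀ lam : Fin N → Bool,
        ρ x y * projN W lam y x * ∏ n, (if O n ≠ none then (if lam n then (1:ℂ) else -1) else 1)
        = ρ x y * ∏ n, (pauliProj (W n) (lam n) (y n) (x n)
            * (if O n ≠ none then (if lam n then (1:ℂ) else -1) else 1)) := by
      intro lam
      rw [Finset.prod_mul_distrib]
      rw [projN]
      ring
    simp only [hswap]
    rw [← Finset.mul_sum]
    congr 1
    rw [← Fintype.piFinset_univ, ← Finset.prod_univ_sum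
      (t := fun _ => (Finset.univ : Finset Bool))
      (f := fun n b => pauliProj (W n) b (y n) (x n)
        * (if O n ≠ none then (if b then (1:ℂ) else -1) else 1))]
    have : obsMat O y x = ∏ n, pauliOfOpt (O n) (y n) (x n) := rfl
    rw [this]
    exact Finset.prod_congr rfl fun n _ => hqbit n (y n) (x n)
  have hre : ∀ lam : Fin N → Bool, born ρ W lam
        * ∏ n ∈ Finset.univ.filter (fun n => O n ≠ none), (if lam n then (1:ℝ) else -1)
      = ((ρ * projN W lam).trace
        * ∏ n ∈ Finset.univ.filter (fun n => O n ≠ none), (if lam n then (1:ℂ) else -1)).re := by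
    intro lam
    have hcast : ((∏ n ∈ Finset.univ.filter (fun n => O n ≠ none),
          (if lam n then (1:ℝ) else -1) : ℝ) : ℂ)
        = ∏ n ∈ Finset.univ.filter (fun n => O n ≠ none), (if lam n then (1:ℂ) else -1) := by
      rw [Complex.ofReal_prod]
      exact Finset.prod_congr rfl fun n _ => by split <;> simp
    rw [born, ← hcast, Complex.mul_re, Complex.ofReal_re, Complex.ofReal_im,
      mul_zero, sub_zero]
  simp only [hre]
  rw [← Complex.re_sum, hcplx, Matrix.trace_mul_comm]

lemma shadow_mean (htrace : ρ.trace = 1) (O : Fin N → Option (Fin 3)) :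
    ∑ σ : (Fin N → Fin 3) × (Fin N → Bool),
        ((3:ℝ)⁻¹ ^ N * born ρ σ.1 σ.2) * shadowEst O σ.1 σ.2
      = ((obsMat O * ρ).trace).re := by
  classical
  rw [Fintype.sum_prod_type]
  have hW : ∀ W : Fin N → Fin 3,
      ∑ lam : Fin N → Bool, ((3:ℝ)⁻¹ ^ N * born ρ W lam) * shadowEst O W lam
      = if (∀ n p, O n = some p → W n = p) then
          (3:ℝ)⁻¹ ^ N * 3 ^ (weight O) * ((obsMat O * ρ).trace).re else 0 := by
    intro W
    by_cases hc : ∀ n p, O n = some p → W n = p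
    · rw [if_pos hc]
      have hterm : ∀ lam : Fin N → Bool,
          ((3:ℝ)⁻¹ ^ N * born ρ W lam) * shadowEst O W lam
          = (3:ℝ)⁻¹ ^ N * 3 ^ (weight O) * (born ρ W lam
              * ∏ n ∈ Finset.univ.filter (fun n => O n ≠ none),
                  (if lam n then (1:ℝ) else -1)) := by
        intro lam
        rw [shadowEst, if_pos hc]
        ring
      simp only [hterm]
      rw [← Finset.mul_sum, signed_born_sum ρ O W hc]
    · rw [if_neg hc]
      have hterm : ∀ lam : Fin N → Bool,
          ((3:ℝ)⁻¹ ^ N * born ρ W lam) * shadowEst O W lam = 0 := by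
        intro lam
        rw [shadowEst, if_neg hc, mul_zero]
      simp only [hterm, Finset.sum_const_zero]
  simp only [hW]
  rw [← Finset.sum_filter, Finset.sum_const, compat_card O, nsmul_eq_mul]
  have hwle : weight O ≤ N := weight_le O
  have h3 : ((3:ℝ) ^ (N - weight O)) * ((3:ℝ)⁻¹ ^ N * 3 ^ (weight O)) = 1 := by
    rw [pow_sub₀ (3:ℝ) (by norm_num) hwle, inv_pow]
    field_simp
  push_cast
  linear_combination ((obsMat O * ρ).trace).re * h3

lemma shadow_sq (htrace : ρ.trace = 1) (O : Fin N → Option (Fin 3)) :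
    ∑ σ : (Fin N → Fin 3) × (Fin N → Bool),
        ((3:ℝ)⁻¹ ^ N * born ρ σ.1 σ.2) * (shadowEst O σ.1 σ.2) ^ 2
      = 3 ^ (weight O) := by
  classical
  rw [Fintype.sum_prod_type]
  have hW : ∀ W : Fin N → Fin 3,
      ∑ lam : Fin N → Bool, ((3:ℝ)⁻¹ ^ N * born ρ W lam) * (shadowEst O W lam) ^ 2
      = if (∀ n p, O n = some p → W n = p) then
          (3:ℝ)⁻¹ ^ N * (3 ^ (weight O)) ^ 2 else 0 := by
    intro W
    by_cases hc : ∀ n p, O n = some p → W n = p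
    · rw [if_pos hc]
      have hterm : ∀ lam : Fin N → Bool,
          ((3:ℝ)⁻¹ ^ N * born ρ W lam) * (shadowEst O W lam) ^ 2
          = ((3:ℝ)⁻¹ ^ N * (3 ^ (weight O)) ^ 2) * born ρ W lam := by
        intro lam
        rw [shadowEst, if_pos hc]
        have hsq : (∏ n ∈ Finset.univ.filter (fun n => O n ≠ none),
            (if lam n then (1:ℝ) else -1)) ^ 2 = 1 := by
          rw [← Finset.prod_pow]
          apply Finset.prod_eq_one
          intro n _
          split <;> norm_num
        rw [mul_pow, hsq, mul_one]
        ring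
      simp only [hterm]
      rw [← Finset.mul_sum, sum_born ρ htrace, mul_one]
    · rw [if_neg hc]
      have hterm : ∀ lam : Fin N → Bool,
          ((3:ℝ)⁻¹ ^ N * born ρ W lam) * (shadowEst O W lam) ^ 2 = 0 := by
        intro lam
        rw [shadowEst, if_neg hc]
        norm_num
      simp only [hterm, Finset.sum_const_zero]
  simp only [hW]
  rw [← Finset.sum_filter, Finset.sum_const, compat_card O, nsmul_eq_mul]
  have hwle : weight O ≤ N := weight_le O
  have h3 : ((3:ℝ) ^ (N - weight O)) * ((3:ℝ)⁻¹ ^ N * ((3:ℝ) ^ (weight O)) ^ 2)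
      = 3 ^ (weight O) := by
    rw [pow_sub₀ (3:ℝ) (by norm_num) hwle, inv_pow]
    field_simp
  push_cast
  exact h3


lemma union_bound {ι Ω : Type*} [Fintype ι] [Fintype Ω] (g : Ω → ℝ)
    (hg : ∀ ω, 0 ≤ g ω) (P : ι → Ω → Prop) :
    ∑ ω ∈ Finset.univ.filter (fun ω => ∃ i, P i ω), g ω
      ≤ ∑ i, ∑ ω ∈ Finset.univ.filter (P i), g ω := by
  classical
  rw [Finset.sum_filter]
  have hrhs : ∑ i, ∑ ω ∈ Finset.univ.filter (P i), g ω
      = ∑ ω : Ω, ∑ i : ι, (if P i ω then g ω else 0) := by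
    rw [Finset.sum_comm]
    exact Finset.sum_congr rfl fun i _ => Finset.sum_filter _ _
  rw [hrhs]
  apply Finset.sum_le_sum
  intro ω _
  by_cases h : ∃ i, P i ω
  · rw [if_pos h]
    obtain ⟨i0, hi0⟩ := h
    have hterm : ∀ i ∈ Finset.univ, (0:ℝ) ≤ (if P i ω then g ω else 0) := by
      intro i _
      split
      · exact hg ω
      · exact le_rfl
    have hsingle := Finset.single_le_sum hterm (Finset.mem_univ i0)
    rwa [if_pos hi0] at hsingle
  · rw [if_neg h]
    apply Finset.sum_nonneg
    intro i _
    split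
    · exact hg ω
    · exact le_rfl

lemma exp_three_bound : (1:ℝ)/25 ≤ Real.exp (-3) := by
  have h1 : Real.exp 3 ≤ 25 := by
    have h2 : Real.exp 3 = Real.exp 1 ^ (3:ℕ) := by
      rw [← Real.exp_nat_mul]
      norm_num
    have h3 : Real.exp 1 ^ (3:ℕ) ≤ 2.7182818286 ^ (3:ℕ) := by
      apply pow_le_pow_left₀ (Real.exp_pos 1).le Real.exp_one_lt_d9.le
    rw [h2]
    refine h3.trans ?_
    norm_num
  rw [Real.exp_neg]
  rw [div_le_iff₀ (by norm_num : (0:ℝ) < 25)]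
  rw [inv_mul_eq_div, le_div_iff₀ (Real.exp_pos 3)]
  linarith

lemma final_arith (B K w L : ℕ) (ε δ : ℝ) (hε : 0 < ε) (hδ : 0 < δ) (hδ1 : δ < 1)
    (hL : 1 ≤ L) (hB : B = ⌈2 * Real.log (2 * L / δ)⌉₊)
    (hK : (100:ℝ) * 3 ^ w / ε ^ 2 ≤ K) (hKpos : 0 < K) :
    (2:ℝ) ^ B * ((3:ℝ) ^ w / (K * ε ^ 2)) ^ (B - B / 2) ≤ δ / (2 * L) := by
  have hKR : (0:ℝ) < K := by exact_mod_cast hKpos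
  have hLR : (1:ℝ) ≤ L := by exact_mod_cast hL
  set t : ℝ := (3:ℝ) ^ w / (K * ε ^ 2) with htdef
  have htnn : 0 ≤ t := by positivity
  have hKe : (100:ℝ) * 3 ^ w ≤ K * ε ^ 2 := by
    rw [div_le_iff₀ (by positivity)] at hK
    nlinarith [hK]
  have ht : t ≤ 1 / 100 := by
    rw [htdef, div_le_div_iff₀ (by positivity) (by norm_num)]
    nlinarith [hKe]
  have ht1 : t ≤ 1 := ht.trans (by norm_num)
  set r : ℝ := Real.log (2 * L / δ) with hrdef
  have h2L : (0:ℝ) < 2 * L / δ := by positivity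
  have hr0 : 0 ≤ r := Real.log_nonneg (by rw [le_div_iff₀ hδ]; nlinarith)
  have hBr : 2 * r ≤ (B : ℝ) := by
    rw [hB]
    exact Nat.le_ceil _
  set m : ℕ := B - B / 2 with hmdef
  have hm : B ≤ 2 * m := by omega
  have hY0 : (0:ℝ) < δ / (2 * L) := by positivity
  have hY1 : δ / (2 * L) ≤ 1 := by
    rw [div_le_one (by positivity)]
    nlinarith
  -- squared comparison
  have hexp : Real.exp (-r) = δ / (2 * L) := by
    rw [Real.exp_neg, hrdef, Real.exp_log h2L, inv_div]
  have hsq : ((2:ℝ) ^ B * t ^ m) ^ 2 ≤ ((δ / (2 * L)) ^ 3) ^ 2 := by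
    have e1 : ((2:ℝ) ^ B * t ^ m) ^ 2 = (4:ℝ) ^ B * t ^ (2 * m) := by
      rw [mul_pow, ← pow_mul, ← pow_mul, mul_comm B 2, pow_mul, mul_comm m 2]
      norm_num
    have e2 : t ^ (2 * m) ≤ t ^ B := pow_le_pow_of_le_one htnn ht1 hm
    have e3 : (4:ℝ) ^ B * t ^ B = (4 * t) ^ B := (mul_pow 4 t B).symm
    have e4 : (4 * t) ^ B ≤ (Real.exp (-3)) ^ B := by
      apply pow_le_pow_left₀ (by positivity)
      calc 4 * t ≤ 4 * (1/100) := by nlinarith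
        _ ≤ 1/25 := by norm_num
        _ ≤ Real.exp (-3) := exp_three_bound
    have e5 : (Real.exp (-3)) ^ B = Real.exp ((B : ℝ) * (-3)) := (Real.exp_nat_mul _ B).symm
    have e6 : Real.exp ((B : ℝ) * (-3)) ≤ Real.exp ((6:ℕ) * (-r)) := by
      apply Real.exp_le_exp.mpr
      push_cast
      nlinarith [hBr]
    have e7 : Real.exp ((6:ℕ) * (-r)) = (Real.exp (-r)) ^ (6:ℕ) := Real.exp_nat_mul _ 6
    have e8 : (Real.exp (-r)) ^ (6:ℕ) = ((δ / (2 * L)) ^ 3) ^ 2 := by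
      rw [hexp, ← pow_mul]
    calc ((2:ℝ) ^ B * t ^ m) ^ 2 = (4:ℝ) ^ B * t ^ (2 * m) := e1
      _ ≤ (4:ℝ) ^ B * t ^ B := by
          apply mul_le_mul_of_nonneg_left e2 (by positivity)
      _ = (4 * t) ^ B := e3
      _ ≤ (Real.exp (-3)) ^ B := e4
      _ = Real.exp ((B : ℝ) * (-3)) := e5
      _ ≤ Real.exp ((6:ℕ) * (-r)) := e6
      _ = (Real.exp (-r)) ^ (6:ℕ) := e7
      _ = ((δ / (2 * L)) ^ 3) ^ 2 := e8
  have hfin : (2:ℝ) ^ B * t ^ m ≤ (δ / (2 * L)) ^ 3 :=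
    le_of_pow_le_pow_left₀ (by norm_num) (by positivity) hsq
  refine hfin.trans ?_
  calc (δ / (2 * L)) ^ 3 ≤ δ / (2 * L) :=
        pow_le_of_le_one hY0.le hY1 (by norm_num)
    _ ≤ δ / (2 * L) := le_rfl

/-- Sample complexity of random Pauli measurements for many observables
(Theorem 1, Pauli case): there is a universal constant `C` such that, with
`B = ⌈2 log(2L/δ)⌉` batches of `K ≥ C·3^w/ε²` single-shot random Pauli-basis
measurements each (so `M = B·K ≥ C'·3^w log(2L/δ)/ε²` in total), the
median-of-means estimators of any `L` Pauli observables of weight at most `w`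
are all within `ε` of `tr(O_i ρ)` except with probability at most `δ`. -/
theorem random_pauli_sample_complexity :
    ∃ C : ℝ, 0 < C ∧
      ∀ (N L B K w : ℕ) (ρ : Matrix (Fin N → Fin 2) (Fin N → Fin 2) ℂ),
        ρ.PosSemidef → ρ.trace = 1 →
        ∀ (O : Fin L → Fin N → Option (Fin 3)), (∀ i, weight (O i) ≤ w) →
        ∀ (ε δ : ℝ), 0 < ε → 0 < δ → δ < 1 → 1 ≤ L →
        B = ⌈2 * Real.log (2 * L / δ)⌉₊ →
        C * 3 ^ w / ε ^ 2 ≤ K →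
        ∑ ω ∈ Finset.univ.filter (fun ω : RMData N B K =>
            ∃ i : Fin L, ε < |momEst (O i) ω - ((obsMat (O i) * ρ).trace).re|),
          rmMass ρ ω ≤ δ := by
  classical
  refine ⟨100, by norm_num, ?_⟩
  intro N L B K w ρ hρ htrace O hwt ε δ hε hδ hδ1 hL hB hK
  set p : (Fin N → Fin 3) × (Fin N → Bool) → ℝ :=
    fun σ => (3:ℝ)⁻¹ ^ N * born ρ σ.1 σ.2 with hpdef
  have hp0 : ∀ σ, 0 ≤ p σ := fun σ =>
    mul_nonneg (by positivity) (born_nonneg ρ hρ σ.1 σ.2)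
  have hp1 : ∑ σ, p σ = 1 := mass_total ρ htrace
  have hKpos : 0 < K := by
    by_contra h
    push_neg at h
    have hK0 : K = 0 := by omega
    have hpos : (0:ℝ) < 100 * 3 ^ w / ε ^ 2 := by positivity
    rw [hK0] at hK
    push_cast at hK
    linarith
  have hLR : (1:ℝ) ≤ L := by exact_mod_cast hL
  -- per-observable bound
  have hper : ∀ i : Fin L,
      ∑ ω ∈ Finset.univ.filter (fun ω : RMData N B K =>
          ε < |momEst (O i) ω - ((obsMat (O i) * ρ).trace).re|), rmMass ρ ω
      ≤ δ / (2 * L) := by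
    intro i
    set f : (Fin N → Fin 3) × (Fin N → Bool) → ℝ :=
      fun σ => shadowEst (O i) σ.1 σ.2 with hfdef
    set μ : ℝ := ((obsMat (O i) * ρ).trace).re with hmudef
    have hmean : ∑ σ, p σ * f σ = μ := shadow_mean ρ htrace (O i)
    have hsqm : ∑ σ, p σ * f σ ^ 2 = 3 ^ (weight (O i)) := shadow_sq ρ htrace (O i)
    have hvar : ∑ σ, p σ * (f σ - μ) ^ 2 ≤ (3:ℝ) ^ w := by
      have hexpand : ∑ σ, p σ * (f σ - μ) ^ 2
          = (∑ σ, p σ * f σ ^ 2) - 2 * μ * (∑ σ, p σ * f σ) + μ ^ 2 * (∑ σ, p σ) := by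
        have hterm : ∀ σ : (Fin N → Fin 3) × (Fin N → Bool), p σ * (f σ - μ) ^ 2
            = p σ * f σ ^ 2 - 2 * μ * (p σ * f σ) + μ ^ 2 * p σ := fun σ => by ring
        simp only [hterm]
        rw [Finset.sum_add_distrib, Finset.sum_sub_distrib, ← Finset.mul_sum,
          ← Finset.mul_sum]
      rw [hexpand, hmean, hp1, hsqm]
      have h3w : (3:ℝ) ^ (weight (O i)) ≤ 3 ^ w :=
        pow_le_pow_right₀ (by norm_num) (hwt i)
      nlinarith [sq_nonneg μ]
    have hmom := mom_bound p hp0 hp1 f μ ((3:ℝ) ^ w) ε hε (by positivity)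
      hmean hvar B K hKpos
    have hEq : ∑ ω ∈ Finset.univ.filter (fun ω : RMData N B K =>
          ε < |momEst (O i) ω - ((obsMat (O i) * ρ).trace).re|), rmMass ρ ω
        = ∑ ω ∈ Finset.univ.filter (fun ω : Fin B × Fin K → (Fin N → Fin 3) × (Fin N → Bool) =>
          ε < |medianFin (fun b => (∑ k, f (ω (b, k))) / K) - μ|), ∏ r, p (ω r) := by
      apply Finset.sum_congr
      · apply Finset.filter_congr
        intro ω _
        exact Iff.rfl
      · intro ω _
        rfl
    rw [hEq]
    refine hmom.trans ?_
    exact final_arith B K w L ε δ hε hδ hδ1 hL hB hK hKpos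
  have hunion := union_bound (rmMass ρ) (fun ω => Finset.prod_nonneg fun r _ =>
      mul_nonneg (by positivity) (born_nonneg ρ hρ (ω r).1 (ω r).2))
    (fun (i : Fin L) (ω : RMData N B K) =>
      ε < |momEst (O i) ω - ((obsMat (O i) * ρ).trace).re|)
  refine le_trans (le_of_eq (by congr)) (hunion.trans ?_)
  calc ∑ i : Fin L, ∑ ω ∈ Finset.univ.filter (fun ω : RMData N B K =>
          ε < |momEst (O i) ω - ((obsMat (O i) * ρ).trace).re|), rmMass ρ ω
      ≤ ∑ _i : Fin L, δ / (2 * L) := Finset.sum_le_sum fun i _ => hper i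
    _ = L * (δ / (2 * L)) := by
        rw [Finset.sum_const, Finset.card_univ, Fintype.card_fin, nsmul_eq_mul]
    _ ≤ δ := by
        have hL0 : (0:ℝ) < L := by linarith
        have heq : (L:ℝ) * (δ / (2 * L)) = δ / 2 := by
          field_simp
        rw [heq]
        linarith
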